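/- Dipole selection rule. Let m, m' ∈ ℤ, and let ψ, ψ' : ℝ³ → ℂ be continuous functions that transform under rotations about the x₃-axis as ψ(R₃(φ)x) = e^{imφ} ψ(x) and ψ'(R₃(φ)x) = e^{im'φ} ψ'(x) for all φ ∈ ℝ and x ∈ ℝ³. Assume x ↦ |x| |ψ(x)| |ψ'(x)| is integrable on ℝ³. If |m − m'| ≥ 2, then the dipole moments vanish: ∫_{ℝ³} x_j ψ(x) conj(ψ'(x)) dx = 0 for j = 1, 2, 3. Moreover, for j = 3 the integral vanishes whenever m ≠ m'. -/

import Mathlib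

noncomputable section

open MeasureTheory

/-- Rotation of ℝ³ by angle `φ` around the `x₃`-axis. -/
def R3 (φ : ℝ) (x : Fin 3 → ℝ) : Fin 3 → ℝ :=
  ![x 0 * Real.cos φ - x 1 * Real.sin φ, x 0 * Real.sin φ + x 1 * Real.cos φ, x 2]

def R3mat (φ : ℝ) : Matrix (Fin 3) (Fin 3) ℝ :=
  !![Real.cos φ, -Real.sin φ, 0; Real.sin φ, Real.cos φ, 0; 0, 0, 1]

lemma R3_eq_toLin' (φ : ℝ) : ⇑(Matrix.toLin' (R3mat φ)) = R3 φ := by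
  funext x
  funext i
  fin_cases i <;>
    simp [Matrix.toLin'_apply, Matrix.mulVec, dotProduct, R3, R3mat,
      Fin.sum_univ_three] <;> ring

lemma R3_measurePreserving (φ : ℝ) :
    MeasurePreserving (R3 φ) (volume : Measure (Fin 3 → ℝ)) volume := by
  have hdet : LinearMap.det (Matrix.toLin' (R3mat φ)) = 1 := by
    rw [LinearMap.det_toLin']
    simp [R3mat, Matrix.det_fin_three]
    nlinarith [Real.sin_sq_add_cos_sq φ]
  constructor
  · rw [← R3_eq_toLin']
    exact (Matrix.toLin' (R3mat φ)).continuous_of_finiteDimensional.measurable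
  · rw [← R3_eq_toLin']
    rw [Measure.map_linearMap_addHaar_eq_smul_addHaar _ (by rw [hdet]; norm_num), hdet]
    norm_num

lemma integral_comp_R3 (φ : ℝ) (g : (Fin 3 → ℝ) → ℂ)
    (hg : AEStronglyMeasurable g (volume : Measure (Fin 3 → ℝ))) :
    ∫ x, g (R3 φ x) = ∫ x, g x := by
  obtain ⟨hm, hmap⟩ := R3_measurePreserving φ
  calc ∫ x, g (R3 φ x)
      = ∫ x, g x ∂(Measure.map (R3 φ) volume) :=
        (integral_map hm.aemeasurable (by rwa [hmap])).symm
    _ = ∫ x, g x := by rw [hmap]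

lemma aux_zero (z : ℂ) (n : ℤ) (hn : n ≠ 0)
    (h : ∀ φ : ℝ, z = Complex.exp (Complex.I * n * φ) * z) : z = 0 := by
  have h1 := h (Real.pi / n)
  have hn' : (n : ℂ) ≠ 0 := Int.cast_ne_zero.mpr hn
  have he : Complex.I * n * ((Real.pi / n : ℝ) : ℂ) = Real.pi * Complex.I := by
    push_cast
    field_simp
  rw [he, Complex.exp_pi_mul_I] at h1
  linear_combination h1 / 2

theorem dipole_selection_rule
    (m m' : ℤ)
    (ψ ψ' : (Fin 3 → ℝ) → ℂ) (hψ : Continuous ψ) (hψ' : Continuous ψ')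
    (hrot : ∀ (φ : ℝ) (x : Fin 3 → ℝ),
      ψ (R3 φ x) = Complex.exp (Complex.I * m * φ) * ψ x)
    (hrot' : ∀ (φ : ℝ) (x : Fin 3 → ℝ),
      ψ' (R3 φ x) = Complex.exp (Complex.I * m' * φ) * ψ' x)
    (hint : Integrable (fun x : Fin 3 → ℝ =>
      Real.sqrt (∑ i, x i ^ 2) * ‖ψ x‖ * ‖ψ' x‖)) :
    (2 ≤ |m - m'| → ∀ j : Fin 3,
      (∫ x : Fin 3 → ℝ, (x j : ℂ) * ψ x * (starRingEnd ℂ) (ψ' x)) = 0)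
    ∧ (m ≠ m' →
      (∫ x : Fin 3 → ℝ, (x 2 : ℂ) * ψ x * (starRingEnd ℂ) (ψ' x)) = 0) := by
  simp only [mul_assoc]
  set F : (Fin 3 → ℝ) → ℂ := fun x => ψ x * (starRingEnd ℂ) (ψ' x) with hF
  have hFcont : Continuous F := hψ.mul (continuous_star.comp hψ')
  -- integrability of each component
  have hg : ∀ j : Fin 3, Integrable (fun x : Fin 3 → ℝ => ((x j : ℝ) : ℂ) * F x) := by
    intro j
    refine hint.mono ((Complex.continuous_ofReal.comp (continuous_apply j)).mul
      hFcont).aestronglyMeasurable ?_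
    filter_upwards with x
    have h1 : ‖((x j : ℝ) : ℂ) * F x‖ = |x j| * (‖ψ x‖ * ‖ψ' x‖) := by
      simp [hF]
    have h2 : |x j| ≤ Real.sqrt (∑ i, x i ^ 2) := by
      rw [← Real.sqrt_sq_eq_abs]
      exact Real.sqrt_le_sqrt (Finset.single_le_sum (fun i _ => sq_nonneg (x i))
        (Finset.mem_univ j))
    rw [h1, Real.norm_eq_abs]
    have : Real.sqrt (∑ i, x i ^ 2) * ‖ψ x‖ * ‖ψ' x‖ =
        Real.sqrt (∑ i, x i ^ 2) * (‖ψ x‖ * ‖ψ' x‖) := by ring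
    rw [this, abs_of_nonneg (mul_nonneg (Real.sqrt_nonneg _)
      (mul_nonneg (norm_nonneg _) (norm_nonneg _)))]
    exact mul_le_mul_of_nonneg_right h2
      (mul_nonneg (norm_nonneg _) (norm_nonneg _))
  -- substitution identity
  have hsub : ∀ (φ : ℝ) (j : Fin 3),
      (∫ x : Fin 3 → ℝ, ((x j : ℝ) : ℂ) * F x) =
        Complex.exp (Complex.I * (m - m') * φ) *
          ∫ x : Fin 3 → ℝ, ((R3 φ x j : ℝ) : ℂ) * F x := by
    intro φ j
    have hmeas : AEStronglyMeasurable (fun x : Fin 3 → ℝ => ((x j : ℝ) : ℂ) * F x)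
        (volume : Measure (Fin 3 → ℝ)) :=
      ((Complex.continuous_ofReal.comp (continuous_apply j)).mul hFcont).aestronglyMeasurable
    have h1 := (integral_comp_R3 φ _ hmeas).symm
    rw [h1]
    rw [show (fun x : Fin 3 → ℝ => ((R3 φ x j : ℝ) : ℂ) * F (R3 φ x)) = fun x =>
        Complex.exp (Complex.I * (m - m') * φ) * (((R3 φ x j : ℝ) : ℂ) * F x) from ?_,
      integral_const_mul]
    funext x
    have hc : (starRingEnd ℂ) (ψ' (R3 φ x)) =
        Complex.exp (-(Complex.I * m' * φ)) * (starRingEnd ℂ) (ψ' x) := by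
      rw [hrot' φ x, map_mul, ← Complex.exp_conj]
      congr 1
      simp [Complex.conj_ofReal]
    have hexp : Complex.exp (Complex.I * m * φ) * Complex.exp (-(Complex.I * m' * φ)) =
        Complex.exp (Complex.I * (m - m') * φ) := by
      rw [← Complex.exp_add]; ring_nf
    simp only [hF, hrot φ x, hc]
    linear_combination (((R3 φ x j : ℝ) : ℂ) * (ψ x * (starRingEnd ℂ) (ψ' x))) * hexp
  set I0 := ∫ x : Fin 3 → ℝ, ((x 0 : ℝ) : ℂ) * F x with hI0
  set I1 := ∫ x : Fin 3 → ℝ, ((x 1 : ℝ) : ℂ) * F x with hI1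
  set I2 := ∫ x : Fin 3 → ℝ, ((x 2 : ℝ) : ℂ) * F x with hI2
  have h2eq : ∀ φ : ℝ, I2 = Complex.exp (Complex.I * ((m - m' : ℤ) : ℂ) * φ) * I2 := by
    intro φ
    have h := hsub φ 2
    have hR : ∀ x : Fin 3 → ℝ, R3 φ x 2 = x 2 := fun _ => rfl
    simp only [hR] at h
    push_cast
    exact h
  have h0eq : ∀ φ : ℝ, I0 = Complex.exp (Complex.I * (m - m') * φ) *
      ((Real.cos φ : ℂ) * I0 - (Real.sin φ : ℂ) * I1) := by
    intro φ
    have h := hsub φ 0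
    have hR : ∀ x : Fin 3 → ℝ, R3 φ x 0 = x 0 * Real.cos φ - x 1 * Real.sin φ :=
      fun _ => rfl
    simp only [hR] at h
    rw [show (fun x : Fin 3 → ℝ => ((x 0 * Real.cos φ - x 1 * Real.sin φ : ℝ) : ℂ) * F x) =
        (fun x : Fin 3 → ℝ => (Real.cos φ : ℂ) * (((x 0 : ℝ) : ℂ) * F x) -
          (Real.sin φ : ℂ) * (((x 1 : ℝ) : ℂ) * F x)) from funext fun x => by push_cast; ring,
      integral_sub ((hg 0).const_mul _) ((hg 1).const_mul _),
      integral_const_mul, integral_const_mul] at h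
    exact h
  have h1eq : ∀ φ : ℝ, I1 = Complex.exp (Complex.I * (m - m') * φ) *
      ((Real.sin φ : ℂ) * I0 + (Real.cos φ : ℂ) * I1) := by
    intro φ
    have h := hsub φ 1
    have hR : ∀ x : Fin 3 → ℝ, R3 φ x 1 = x 0 * Real.sin φ + x 1 * Real.cos φ :=
      fun _ => rfl
    simp only [hR] at h
    rw [show (fun x : Fin 3 → ℝ => ((x 0 * Real.sin φ + x 1 * Real.cos φ : ℝ) : ℂ) * F x) =
        (fun x : Fin 3 → ℝ => (Real.sin φ : ℂ) * (((x 0 : ℝ) : ℂ) * F x) +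
          (Real.cos φ : ℂ) * (((x 1 : ℝ) : ℂ) * F x)) from funext fun x => by push_cast; ring,
      integral_add ((hg 0).const_mul _) ((hg 1).const_mul _),
      integral_const_mul, integral_const_mul] at h
    exact h
  constructor
  · intro hmm j
    have hA : ∀ φ : ℝ, I0 + Complex.I * I1 =
        Complex.exp (Complex.I * ((m - m' + 1 : ℤ) : ℂ) * φ) * (I0 + Complex.I * I1) := by
      intro φ
      have e0 := h0eq φ
      have e1 := h1eq φ
      have hex : Complex.exp (Complex.I * ((m - m' + 1 : ℤ) : ℂ) * φ) =
          Complex.exp (Complex.I * (m - m') * φ) *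
            ((Real.cos φ : ℂ) + (Real.sin φ : ℂ) * Complex.I) := by
        rw [show ((Real.cos φ : ℂ) + (Real.sin φ : ℂ) * Complex.I) =
            Complex.exp ((φ : ℂ) * Complex.I) by
          rw [Complex.exp_mul_I, Complex.ofReal_cos, Complex.ofReal_sin],
          ← Complex.exp_add]
        push_cast
        ring_nf
      rw [hex]
      linear_combination e0 + Complex.I * e1 - (I1 * Complex.exp (Complex.I * ((m:ℂ) - m') * φ) * (Real.sin φ : ℂ)) * Complex.I_sq
    have hB : ∀ φ : ℝ, I0 - Complex.I * I1 =
        Complex.exp (Complex.I * ((m - m' - 1 : ℤ) : ℂ) * φ) * (I0 - Complex.I * I1) := by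
      intro φ
      have e0 := h0eq φ
      have e1 := h1eq φ
      have hex : Complex.exp (Complex.I * ((m - m' - 1 : ℤ) : ℂ) * φ) =
          Complex.exp (Complex.I * (m - m') * φ) *
            ((Real.cos φ : ℂ) - (Real.sin φ : ℂ) * Complex.I) := by
        rw [show ((Real.cos φ : ℂ) - (Real.sin φ : ℂ) * Complex.I) =
            Complex.exp ((-φ : ℂ) * Complex.I) by
          rw [Complex.exp_mul_I, Complex.cos_neg, Complex.sin_neg,
            Complex.ofReal_cos, Complex.ofReal_sin]; ring,
          ← Complex.exp_add]
        push_cast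
        ring_nf
      rw [hex]
      linear_combination e0 - Complex.I * e1 - (I1 * Complex.exp (Complex.I * ((m:ℂ) - m') * φ) * (Real.sin φ : ℂ)) * Complex.I_sq
    have zA : I0 + Complex.I * I1 = 0 := aux_zero _ _ (by rcases le_abs.mp hmm with h | h <;> omega) hA
    have zB : I0 - Complex.I * I1 = 0 := aux_zero _ _ (by rcases le_abs.mp hmm with h | h <;> omega) hB
    have z0 : I0 = 0 := by linear_combination zA / 2 + zB / 2
    have z1 : I1 = 0 := by
      linear_combination (-Complex.I / 2) * zA + (Complex.I / 2) * zB + I1 * Complex.I_sq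
    have z2 : I2 = 0 := aux_zero _ _ (by rcases le_abs.mp hmm with h | h <;> omega) h2eq
    fin_cases j
    · exact z0
    · exact z1
    · exact z2
  · intro hne
    exact aux_zero _ _ (sub_ne_zero.mpr hne) h2eq
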